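/- For each x > 0 let u_x : [0, x] → ℝ be the strictly increasing solution of u'' = u², u(0) = 0, u(x) = 1, and suppose u_x(y) = 6·℘_{Λ_{ω_x}}(y + 2ω_x/3) where ω_x > 0 and Λ_ω = {m·(ω/√3)·e^{iπ/6} + n·(ω/√3)·e^{iπ/2} : m, n ∈ ℤ}. Set c₁ = ω₁/3 and C₁ = 6·c₁³·℘'_{Λ_{ω₁}}(2ω₁/3), where ω₁ is the period corresponding to x = 1. Then for each fixed y > 0, lim_{x→∞} x³·u_x(y) = C₁·y. -/

import Mathlib

open Set Filter
open scoped Topology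

/-- The Weierstrass ℘-function of the lattice `Λ`. -/
noncomputable def wp (Λ : Set ℂ) (z : ℂ) : ℂ :=
  1 / z ^ 2 + ∑' l : {l : ℂ // l ∈ Λ ∧ l ≠ 0}, (1 / (z - (l : ℂ)) ^ 2 - 1 / (l : ℂ) ^ 2)

/-- The lattice `Λ_ω` generated by `(ω/√3) e^{iπ/6}` and `(ω/√3) e^{iπ/2}`. -/
noncomputable def Lomega (ω : ℝ) : Set ℂ :=
  {z : ℂ | ∃ m n : ℤ,
    z = (m : ℂ) * (((ω / Real.sqrt 3 : ℝ) : ℂ) * Complex.exp ((Real.pi : ℂ) * Complex.I / 6)) +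
        (n : ℂ) * (((ω / Real.sqrt 3 : ℝ) : ℂ) * Complex.exp ((Real.pi : ℂ) * Complex.I / 2))}

namespace WPaux

open Complex

lemma sqrt3_pos : (0:ℝ) < Real.sqrt 3 := Real.sqrt_pos.mpr (by norm_num)

lemma sqrt3_ne : (Real.sqrt 3 : ℝ) ≠ 0 := ne_of_gt sqrt3_pos

lemma sqrt3_sq : Real.sqrt 3 * Real.sqrt 3 = 3 := Real.mul_self_sqrt (by norm_num)

lemma sqrt3_lt_two : Real.sqrt 3 < 2 := by
  nlinarith [sqrt3_sq, sqrt3_pos]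

lemma one_le_sqrt3 : (1:ℝ) ≤ Real.sqrt 3 := by
  nlinarith [sqrt3_sq, sqrt3_pos]

lemma exp_pi_six : Complex.exp ((Real.pi : ℂ) * Complex.I / 6)
    = ((Real.sqrt 3 / 2 : ℝ) : ℂ) + Complex.I * ((1/2 : ℝ) : ℂ) := by
  have h : ((Real.pi : ℂ) * Complex.I / 6) = ((Real.pi / 6 : ℝ) : ℂ) * Complex.I := by
    push_cast; ring
  rw [h, Complex.exp_mul_I]
  rw [← Complex.ofReal_cos, ← Complex.ofReal_sin, Real.cos_pi_div_six, Real.sin_pi_div_six]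
  push_cast; ring

lemma exp_pi_two : Complex.exp ((Real.pi : ℂ) * Complex.I / 2) = Complex.I := by
  have h : ((Real.pi : ℂ) * Complex.I / 2) = ((Real.pi / 2 : ℝ) : ℂ) * Complex.I := by
    push_cast; ring
  rw [h, Complex.exp_mul_I]
  rw [← Complex.ofReal_cos, ← Complex.ofReal_sin, Real.cos_pi_div_two, Real.sin_pi_div_two]
  push_cast; ring

/-- The lattice point with coordinates (m,n). -/
noncomputable def elt (m n : ℤ) : ℂ :=
  ((m/2 : ℝ) : ℂ) + (((m + 2*n)/(2*Real.sqrt 3) : ℝ) : ℂ) * Complex.I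

lemma elt_re (m n : ℤ) : (elt m n).re = (m:ℝ)/2 := by
  simp only [elt, Complex.add_re, Complex.ofReal_re, Complex.mul_re, Complex.I_re,
    Complex.I_im, Complex.ofReal_im]
  ring

lemma elt_im (m n : ℤ) : (elt m n).im = ((m:ℝ) + 2*n)/(2*Real.sqrt 3) := by
  simp only [elt, Complex.add_im, Complex.ofReal_im, Complex.mul_im, Complex.I_re,
    Complex.I_im, Complex.ofReal_re]
  ring

lemma mem_L1_iff {z : ℂ} : z ∈ Lomega 1 ↔ ∃ m n : ℤ, z = elt m n := by
  constructor
  · rintro ⟨m, n, rfl⟩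
    refine ⟨m, n, ?_⟩
    rw [exp_pi_six, exp_pi_two, elt]
    have h3 : (Real.sqrt 3 : ℂ) * (Real.sqrt 3 : ℂ) = 3 := by
      norm_cast; exact_mod_cast sqrt3_sq
    have hne : (Real.sqrt 3 : ℂ) ≠ 0 := by exact_mod_cast sqrt3_ne
    push_cast
    field_simp
    ring_nf
  · rintro ⟨m, n, rfl⟩
    refine ⟨m, n, ?_⟩
    rw [exp_pi_six, exp_pi_two, elt]
    have h3 : (Real.sqrt 3 : ℂ) * (Real.sqrt 3 : ℂ) = 3 := by
      norm_cast; exact_mod_cast sqrt3_sq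
    have hne : (Real.sqrt 3 : ℂ) ≠ 0 := by exact_mod_cast sqrt3_ne
    push_cast
    field_simp
    ring_nf


lemma elt_eq_iff {m n m' n' : ℤ} : elt m n = elt m' n' ↔ m = m' ∧ n = n' := by
  constructor
  · intro h
    have hre := congrArg Complex.re h
    have him := congrArg Complex.im h
    rw [elt_re, elt_re] at hre
    rw [elt_im, elt_im] at him
    have hm : (m:ℝ) = m' := by linarith
    have h2 : ((m:ℝ) + 2*n) = (m' + 2*n') := by
      have := mul_ne_zero (two_ne_zero (α := ℝ)) sqrt3_ne
      field_simp at him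
      linarith [him]
    have hn : (n:ℝ) = n' := by linarith
    exact ⟨by exact_mod_cast hm, by exact_mod_cast hn⟩
  · rintro ⟨rfl, rfl⟩; rfl

lemma elt_zero_iff {m n : ℤ} : elt m n = 0 ↔ m = 0 ∧ n = 0 := by
  have h : (0:ℂ) = elt 0 0 := by
    simp [elt]
  rw [h, elt_eq_iff]

lemma abs_le_max_mul {m n : ℤ} : (max |m| |n| : ℝ) ≤ 2 * Real.sqrt 3 * ‖elt m n‖ := by
  have hre : |(elt m n).re| ≤ ‖elt m n‖ := Complex.abs_re_le_norm _
  have him : |(elt m n).im| ≤ ‖elt m n‖ := Complex.abs_im_le_norm _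
  rw [elt_re] at hre
  rw [elt_im] at him
  rw [abs_div] at hre him
  rw [abs_of_pos (by norm_num : (0:ℝ) < 2)] at hre
  rw [abs_of_pos (by positivity : (0:ℝ) < 2 * Real.sqrt 3)] at him
  have h1 : |(m:ℝ)| ≤ 2 * ‖elt m n‖ := by
    rw [div_le_iff₀ (by norm_num : (0:ℝ) < 2)] at hre; linarith
  have h2 : |(m:ℝ) + 2*n| ≤ 2 * Real.sqrt 3 * ‖elt m n‖ := by
    rw [div_le_iff₀ (by positivity : (0:ℝ) < 2 * Real.sqrt 3)] at him; linarith
  have hs3 : (1:ℝ) ≤ Real.sqrt 3 := one_le_sqrt3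
  have hnn : (0:ℝ) ≤ ‖elt m n‖ := norm_nonneg _
  have h3 : 2 * |(n:ℝ)| ≤ |(m:ℝ) + 2*n| + |(m:ℝ)| := by
    have hadd := abs_add_le ((m:ℝ) + 2*n) (-(m:ℝ))
    rw [show ((m:ℝ) + 2*n) + (-(m:ℝ)) = 2*n by ring, abs_neg] at hadd
    rw [show |(2:ℝ)*n| = 2 * |(n:ℝ)| by rw [abs_mul]; norm_num] at hadd
    exact hadd
  have hn : |(n:ℝ)| ≤ 2 * Real.sqrt 3 * ‖elt m n‖ := by nlinarith [abs_nonneg ((m:ℝ))]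
  have hm : |(m:ℝ)| ≤ 2 * Real.sqrt 3 * ‖elt m n‖ := by nlinarith
  exact max_le hm hn

lemma elt_norm_pos {m n : ℤ} (h : ¬(m = 0 ∧ n = 0)) : (0:ℝ) < ‖elt m n‖ := by
  rw [norm_pos_iff]
  intro h0
  exact h (elt_zero_iff.mp h0)

/-- Any lattice point within distance 1/4 of a real number is an integer. -/
lemma lattice_near_real {t : ℝ} {l : ℂ} (hl : l ∈ Lomega 1) (h : ‖(t:ℂ) - l‖ < 1/4) :
    ∃ k : ℤ, l = (k:ℂ) ∧ |t - (k:ℝ)| < 1/4 := by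
  obtain ⟨m, n, rfl⟩ := mem_L1_iff.mp hl
  have him : |((t:ℂ) - elt m n).im| ≤ ‖(t:ℂ) - elt m n‖ := Complex.abs_im_le_norm _
  have him2 : ((t:ℂ) - elt m n).im = -(((m:ℝ) + 2*n)/(2*Real.sqrt 3)) := by
    rw [Complex.sub_im, Complex.ofReal_im, elt_im]; ring
  rw [him2, abs_neg, abs_div, abs_of_pos (by positivity : (0:ℝ) < 2*Real.sqrt 3)] at him
  have hmn : m + 2*n = 0 := by
    by_contra hne
    have h1 : (1:ℝ) ≤ |(m:ℝ) + 2*n| := by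
      have h1' : (1:ℤ) ≤ |m + 2*n| := Int.one_le_abs hne
      have : |(m:ℝ) + 2*n| = ((|m + 2*n| : ℤ) : ℝ) := by push_cast; ring_nf
      rw [this]; exact_mod_cast h1'
    have hX : |(m:ℝ) + 2*n| ≤ ‖(t:ℂ) - elt m n‖ * (2*Real.sqrt 3) :=
      (div_le_iff₀ (show (0:ℝ) < 2*Real.sqrt 3 by positivity)).mp him
    have hY : ‖(t:ℂ) - elt m n‖ * (2*Real.sqrt 3) < (1/4) * (2*Real.sqrt 3) :=
      mul_lt_mul_of_pos_right h (by positivity)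
    linarith [sqrt3_lt_two]
  have hmz : m = -2*n := by omega
  have helt : elt m n = ((-n : ℤ):ℝ) := by
    rw [elt, hmz]
    push_cast
    rw [show (-2*(n:ℂ) + 2*n : ℂ) = 0 by ring, zero_div, zero_mul, add_zero]
    ring
  refine ⟨-n, by rw [helt]; norm_cast, ?_⟩
  calc |t - ((-n:ℤ):ℝ)| = ‖(t:ℂ) - elt m n‖ := by
        rw [helt, ← Complex.ofReal_sub, Complex.norm_real]
        exact (Real.norm_eq_abs _).symm
    _ < 1/4 := h

lemma int_mem_L1 (k : ℤ) : ((k:ℝ):ℂ) ∈ Lomega 1 := by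
  rw [mem_L1_iff]
  refine ⟨2*k, -k, ?_⟩
  rw [elt]
  push_cast
  rw [show (2*(k:ℂ) + 2*(-k) : ℂ) = 0 by ring, zero_div, zero_mul, add_zero]
  ring


/-- Equivalence between nonzero integer pairs and nonzero lattice points. -/
noncomputable def latEquiv : {p : ℤ × ℤ // p ≠ 0} ≃ {l : ℂ // l ∈ Lomega 1 ∧ l ≠ 0} :=
  Equiv.ofBijective
    (fun p => ⟨elt p.1.1 p.1.2, mem_L1_iff.mpr ⟨p.1.1, p.1.2, rfl⟩, by
      intro h0
      obtain ⟨hm, hn⟩ := elt_zero_iff.mp h0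
      exact p.2 (Prod.ext hm hn)⟩)
    (by
      constructor
      · rintro ⟨⟨m, n⟩, hp⟩ ⟨⟨m', n'⟩, hp'⟩ h
        have := elt_eq_iff.mp (Subtype.ext_iff.mp h)
        simp only [Subtype.mk.injEq, Prod.mk.injEq]
        exact this
      · rintro ⟨l, hl, hl0⟩
        obtain ⟨m, n, rfl⟩ := mem_L1_iff.mp hl
        refine ⟨⟨(m, n), ?_⟩, rfl⟩
        intro h0
        rw [Prod.ext_iff] at h0
        exact hl0 (elt_zero_iff.mpr ⟨h0.1, h0.2⟩))

@[simp] lemma latEquiv_val (p : {p : ℤ × ℤ // p ≠ 0}) :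
    (latEquiv p : ℂ) = elt p.1.1 p.1.2 := rfl

lemma one_le_max {p : ℤ × ℤ} (hp : p ≠ 0) : (1:ℝ) ≤ ((max |p.1| |p.2| : ℤ) : ℝ) := by
  have h1 : p.1 ≠ 0 ∨ p.2 ≠ 0 := by
    rcases eq_or_ne p.1 0 with h | h
    · rcases eq_or_ne p.2 0 with h2 | h2
      · exact absurd (Prod.ext h h2) hp
      · exact Or.inr h2
    · exact Or.inl h
  have : (1:ℤ) ≤ max |p.1| |p.2| := by
    rcases h1 with h | h
    · exact le_trans (Int.one_le_abs h) (le_max_left _ _)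
    · exact le_trans (Int.one_le_abs h) (le_max_right _ _)
  exact_mod_cast this

lemma summable_base :
    Summable (fun p : ℤ × ℤ => 1 / ((max |p.1| |p.2| : ℤ) : ℝ) ^ 3) := by
  have h := EisensteinSeries.summable_one_div_norm_rpow (k := 3) (by norm_num)
  have h2 := ((finTwoArrowEquiv ℤ).symm.summable_iff (f := fun x : Fin 2 → ℤ => ‖x‖ ^ (-(3:ℝ)))).mpr h
  apply h2.congr
  intro p
  simp only [Function.comp_apply, finTwoArrowEquiv_symm_apply]
  rw [EisensteinSeries.norm_eq_max_natAbs]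
  simp only [Matrix.cons_val_zero, Matrix.cons_val_one, Matrix.head_cons]
  have hcast : ((max (p.1).natAbs (p.2).natAbs : ℕ) : ℝ) = ((max |p.1| |p.2| : ℤ) : ℝ) := by
    push_cast [Nat.cast_natAbs]
    rfl
  rw [hcast]
  have hnn : (0:ℝ) ≤ ((max |p.1| |p.2| : ℤ) : ℝ) := by positivity
  rw [Real.rpow_neg hnn, show (3:ℝ) = ((3:ℕ):ℝ) by norm_num, Real.rpow_natCast, one_div]

lemma summable_inv_cube :
    Summable (fun l : {l : ℂ // l ∈ Lomega 1 ∧ l ≠ 0} => 1 / ‖(l:ℂ)‖ ^ 3) := by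
  rw [← latEquiv.summable_iff]
  have hbase : Summable (fun p : {p : ℤ × ℤ // p ≠ 0} =>
      (2*Real.sqrt 3)^3 * (1 / ((max |p.1.1| |p.1.2| : ℤ) : ℝ) ^ 3)) :=
    ((summable_base.mul_left ((2*Real.sqrt 3)^3)).comp_injective Subtype.coe_injective)
  apply Summable.of_nonneg_of_le
    (fun p => by simp only [Function.comp_apply]; positivity) _ hbase
  intro p
  simp only [Function.comp_apply, latEquiv_val]
  have hM : (1:ℝ) ≤ ((max |p.1.1| |p.1.2| : ℤ) : ℝ) := one_le_max p.2
  have hMpos : (0:ℝ) < ((max |p.1.1| |p.1.2| : ℤ) : ℝ) := by linarith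
  have he : (0:ℝ) < ‖elt p.1.1 p.1.2‖ := by
    apply elt_norm_pos
    intro ⟨h1, h2⟩
    exact p.2 (Prod.ext h1 h2)
  have hle : ((max |p.1.1| |p.1.2| : ℤ) : ℝ) ≤ 2 * Real.sqrt 3 * ‖elt p.1.1 p.1.2‖ := by
    have := abs_le_max_mul (m := p.1.1) (n := p.1.2)
    convert this using 2
    push_cast
    rfl
  have key : 1 / ‖elt p.1.1 p.1.2‖ ≤ 2 * Real.sqrt 3 / ((max |p.1.1| |p.1.2| : ℤ) : ℝ) := by
    rw [div_le_div_iff₀ he hMpos]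
    linarith
  calc 1 / ‖elt p.1.1 p.1.2‖ ^ 3 = (1 / ‖elt p.1.1 p.1.2‖)^3 := by rw [div_pow]; norm_num
    _ ≤ (2 * Real.sqrt 3 / ((max |p.1.1| |p.1.2| : ℤ) : ℝ))^3 := by
        apply pow_le_pow_left₀ (by positivity) key
    _ = (2*Real.sqrt 3)^3 * (1 / ((max |p.1.1| |p.1.2| : ℤ) : ℝ) ^ 3) := by
        rw [div_pow]; ring

lemma finite_small (C : ℝ) :
    {l : {l : ℂ // l ∈ Lomega 1 ∧ l ≠ 0} | ‖(l:ℂ)‖ < C}.Finite := by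
  rw [← Equiv.image_preimage latEquiv {l | ‖(l:ℂ)‖ < C}]
  apply Set.Finite.image
  set N : ℤ := ⌈2 * Real.sqrt 3 * C⌉ with hN
  have hsub : (latEquiv ⁻¹' {l | ‖(l:ℂ)‖ < C}) ⊆
      (Subtype.val ⁻¹' (Set.Icc ((-N, -N) : ℤ × ℤ) ((N, N) : ℤ × ℤ))) := by
    intro p hp
    simp only [Set.mem_preimage, Set.mem_setOf_eq, latEquiv_val] at hp
    have h1 : ((max |p.1.1| |p.1.2| : ℤ) : ℝ) ≤ 2 * Real.sqrt 3 * ‖elt p.1.1 p.1.2‖ := by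
      have := abs_le_max_mul (m := p.1.1) (n := p.1.2)
      convert this using 2
      push_cast
      rfl
    have h2 : 2 * Real.sqrt 3 * ‖elt p.1.1 p.1.2‖ ≤ 2 * Real.sqrt 3 * C := by
      apply mul_le_mul_of_nonneg_left hp.le (by positivity)
    have h3 : ((max |p.1.1| |p.1.2| : ℤ) : ℝ) ≤ (N : ℝ) := by
      calc ((max |p.1.1| |p.1.2| : ℤ) : ℝ) ≤ 2 * Real.sqrt 3 * C := le_trans h1 h2
        _ ≤ (N : ℝ) := Int.le_ceil _
    have h4 : max |p.1.1| |p.1.2| ≤ N := by exact_mod_cast h3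
    have hm := abs_le.mp (le_trans (le_max_left |p.1.1| |p.1.2|) h4)
    have hn := abs_le.mp (le_trans (le_max_right |p.1.1| |p.1.2|) h4)
    simp only [Set.mem_preimage, Set.mem_Icc, Prod.le_def]
    exact ⟨⟨hm.1, hn.1⟩, hm.2, hn.2⟩
  exact Set.Finite.subset (Set.Finite.preimage (Set.injOn_of_injective Subtype.val_injective)
    (Set.finite_Icc _ _)) hsub

lemma term_bound {R : ℝ} (hR : 1 ≤ R) {z l : ℂ} (hz : ‖z‖ ≤ R) (hl : 4*R ≤ ‖l‖) :
    ‖1/(z - l)^2 - 1/l^2‖ ≤ 6*R * (1/‖l‖^3) := by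
  have hl0 : (0:ℝ) < ‖l‖ := lt_of_lt_of_le (by linarith) hl
  have hlne : l ≠ 0 := norm_pos_iff.mp hl0
  have hzl : (3/4)*‖l‖ ≤ ‖z - l‖ := by
    have h1 : ‖l‖ - ‖z‖ ≤ ‖l - z‖ := norm_sub_norm_le _ _
    rw [norm_sub_rev] at h1
    linarith
  have hzl0 : z - l ≠ 0 := by
    apply norm_pos_iff.mp
    nlinarith
  have hid : 1/(z - l)^2 - 1/l^2 = z*(2*l - z) / ((z-l)^2 * l^2) := by
    field_simp
    ring
  rw [hid, norm_div, norm_mul, norm_mul, norm_pow, norm_pow]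
  have hnum : ‖z‖ * ‖2*l - z‖ ≤ R * (3*‖l‖) := by
    have h2 : ‖2*l - z‖ ≤ 2*‖l‖ + ‖z‖ := by
      calc ‖2*l - z‖ ≤ ‖2*l‖ + ‖z‖ := norm_sub_le _ _
        _ = 2*‖l‖ + ‖z‖ := by rw [norm_mul]; norm_num
    have h3 : ‖2*l - z‖ ≤ 3*‖l‖ := by nlinarith
    apply mul_le_mul hz h3 (norm_nonneg _) (by linarith)
  have h5 : (3/4*‖l‖)^2 ≤ ‖z-l‖^2 := by nlinarith [norm_nonneg (z-l), norm_nonneg l]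
  have hden : (9/16)*‖l‖^4 ≤ ‖z-l‖^2 * ‖l‖^2 := by nlinarith [sq_nonneg ‖l‖, norm_nonneg l]
  calc ‖z‖ * ‖2*l - z‖ / (‖z - l‖^2 * ‖l‖^2) ≤ (R * (3*‖l‖)) / ((9/16)*‖l‖^4) := by
        apply div_le_div₀ (by positivity) hnum (by positivity) hden
    _ = (16/3) * R * (1/‖l‖^3) := by
        rw [div_eq_iff (by positivity : ((9:ℝ)/16)*‖l‖^4 ≠ 0)]
        have hinv : ‖l‖ ^ 4 * (‖l‖⁻¹)^3 = ‖l‖ := by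
          rw [inv_pow, ← div_eq_mul_inv, eq_comm, eq_div_iff (by positivity : ‖l‖^3 ≠ 0)]
          ring
        linear_combination (-3*R) * hinv
    _ ≤ 6*R * (1/‖l‖^3) := by
        apply mul_le_mul_of_nonneg_right _ (by positivity)
        nlinarith

lemma summable_term (z : ℂ) :
    Summable (fun l : {l : ℂ // l ∈ Lomega 1 ∧ l ≠ 0} =>
      1/(z - (l:ℂ))^2 - 1/(l:ℂ)^2) := by
  set R : ℝ := max ‖z‖ 1 with hRdef
  have hR : 1 ≤ R := le_max_right _ _
  have hz : ‖z‖ ≤ R := le_max_left _ _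
  refine Summable.of_norm_bounded_eventually
    (g := fun l : {l : ℂ // l ∈ Lomega 1 ∧ l ≠ 0} => 6*R * (1/‖(l:ℂ)‖^3))
    (summable_inv_cube.mul_left (6*R)) ?_
  rw [Filter.eventually_cofinite]
  have hfin : {l : {l : ℂ // l ∈ Lomega 1 ∧ l ≠ 0} | ‖(l:ℂ)‖ < 4*R}.Finite :=
    finite_small (4*R)
  apply Set.Finite.subset hfin
  intro l hl
  simp only [Set.mem_setOf_eq, Set.mem_compl_iff] at hl ⊢
  by_contra hc
  push_neg at hc
  exact hl (term_bound hR hz hc)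


/-- Every nonzero lattice point has norm at least 1/4. -/
lemma lattice_norm_lb (l : {l : ℂ // l ∈ Lomega 1 ∧ l ≠ 0}) : (1/4 : ℝ) ≤ ‖(l:ℂ)‖ := by
  obtain ⟨p, rfl⟩ := latEquiv.surjective l
  rw [latEquiv_val]
  have h1 : (1:ℝ) ≤ ((max |p.1.1| |p.1.2| : ℤ) : ℝ) := one_le_max p.2
  have h2 : ((max |p.1.1| |p.1.2| : ℤ) : ℝ) ≤ 2 * Real.sqrt 3 * ‖elt p.1.1 p.1.2‖ := by
    have := abs_le_max_mul (m := p.1.1) (n := p.1.2)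
    convert this using 2
    push_cast
    rfl
  nlinarith [sqrt3_lt_two, sqrt3_pos, norm_nonneg (elt p.1.1 p.1.2)]

/-- The lattice sum, with terms in `E` removed, is differentiable on a ball avoiding
all lattice points outside `E`. -/
lemma tsum_ex_diffOn (E : Set {l : ℂ // l ∈ Lomega 1 ∧ l ≠ 0})
    [DecidablePred (· ∈ E)] {z₀ : ℂ} {δ : ℝ}
    (hδ : 0 < δ) (hδ1 : δ ≤ 1)
    (h : ∀ l : {l : ℂ // l ∈ Lomega 1 ∧ l ≠ 0}, l ∉ E → δ ≤ ‖z₀ - (l:ℂ)‖) :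
    DifferentiableOn ℂ
      (fun z => ∑' l : {l : ℂ // l ∈ Lomega 1 ∧ l ≠ 0},
        (if l ∈ E then 0 else (1/(z - (l:ℂ))^2 - 1/(l:ℂ)^2)))
      (Metric.ball z₀ (δ/2)) := by
  set R : ℝ := ‖z₀‖ + 1 with hRdef
  have hR : 1 ≤ R := by
    rw [hRdef]
    linarith [norm_nonneg z₀]
  have hball : ∀ w ∈ Metric.ball z₀ (δ/2), ‖w‖ ≤ R := by
    intro w hw
    rw [Metric.mem_ball, dist_eq_norm] at hw
    calc ‖w‖ = ‖(w - z₀) + z₀‖ := by ring_nf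
      _ ≤ ‖w - z₀‖ + ‖z₀‖ := norm_add_le _ _
      _ ≤ R := by rw [hRdef]; linarith
  have hdist : ∀ (l : {l : ℂ // l ∈ Lomega 1 ∧ l ≠ 0}), l ∉ E →
      ∀ w ∈ Metric.ball z₀ (δ/2), δ/2 ≤ ‖w - (l:ℂ)‖ := by
    intro l hl w hw
    rw [Metric.mem_ball, dist_eq_norm] at hw
    have h1 := h l hl
    calc δ/2 = δ - δ/2 := by ring
      _ ≤ ‖z₀ - (l:ℂ)‖ - ‖w - z₀‖ := by linarith
      _ ≤ ‖w - (l:ℂ)‖ := by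
          have := norm_sub_le_norm_sub_add_norm_sub z₀ w (l:ℂ)
          have h2 : ‖z₀ - (l:ℂ)‖ ≤ ‖z₀ - w‖ + ‖w - (l:ℂ)‖ := by
            calc ‖z₀ - (l:ℂ)‖ = ‖(z₀ - w) + (w - (l:ℂ))‖ := by ring_nf
              _ ≤ ‖z₀ - w‖ + ‖w - (l:ℂ)‖ := norm_add_le _ _
          rw [norm_sub_rev z₀ w] at h2
          linarith
  apply differentiableOn_tsum_of_summable_norm
    (u := fun l : {l : ℂ // l ∈ Lomega 1 ∧ l ≠ 0} =>
      if ‖(l:ℂ)‖ < 4*R then 4/(δ/2)^2 + 16 else 6*R*(1/‖(l:ℂ)‖^3))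
  · -- summability of u
    refine Summable.of_norm_bounded_eventually
      (g := fun l : {l : ℂ // l ∈ Lomega 1 ∧ l ≠ 0} => 6*R*(1/‖(l:ℂ)‖^3))
      (summable_inv_cube.mul_left (6*R)) ?_
    rw [Filter.eventually_cofinite]
    apply Set.Finite.subset (finite_small (4*R))
    intro l hl
    simp only [Set.mem_setOf_eq] at hl ⊢
    by_contra hc
    push_neg at hc
    rw [if_neg (not_lt.mpr hc)] at hl
    exact hl (by
      rw [Real.norm_eq_abs]
      exact (_root_.abs_of_nonneg (by positivity)).le)
  · -- each term differentiable
    intro l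
    by_cases hE : l ∈ E
    · simp only [if_pos hE]
      exact differentiableOn_const 0
    · simp only [if_neg hE]
      apply DifferentiableOn.sub
      · apply DifferentiableOn.div (differentiableOn_const _)
        · exact (differentiableOn_id.sub (differentiableOn_const _)).pow 2
        · intro w hw
          apply pow_ne_zero
          rw [sub_ne_zero]
          intro hwl
          have := hdist l hE w hw
          rw [hwl, sub_self, norm_zero] at this
          linarith
      · exact differentiableOn_const _
  · exact Metric.isOpen_ball
  · -- the bound
    intro l w hw
    by_cases hE : l ∈ E
    · simp only [if_pos hE, norm_zero]
      split
      · positivity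
      · positivity
    · simp only [if_neg hE]
      by_cases hlt : ‖(l:ℂ)‖ < 4*R
      · rw [if_pos hlt]
        have h1 : δ/2 ≤ ‖w - (l:ℂ)‖ := hdist l hE w hw
        have h2 : (1/4:ℝ) ≤ ‖(l:ℂ)‖ := lattice_norm_lb l
        have hwl : w - (l:ℂ) ≠ 0 := by
          intro h0
          rw [h0, norm_zero] at h1
          linarith
        calc ‖1/(w - (l:ℂ))^2 - 1/(l:ℂ)^2‖
            ≤ ‖1/(w - (l:ℂ))^2‖ + ‖1/(l:ℂ)^2‖ := norm_sub_le _ _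
          _ = 1/‖w - (l:ℂ)‖^2 + 1/‖(l:ℂ)‖^2 := by
              rw [norm_div, norm_div, norm_one, norm_pow, norm_pow]
          _ ≤ 4/(δ/2)^2 + 16 := by
              have hp1 : (0:ℝ) < ‖w - (l:ℂ)‖ := norm_pos_iff.mpr hwl
              have hp2 : (0:ℝ) < ‖(l:ℂ)‖ := lt_of_lt_of_le (by norm_num) h2
              apply add_le_add
              · rw [div_le_div_iff₀ (pow_pos hp1 2) (by positivity)]
                nlinarith
              · rw [div_le_iff₀ (pow_pos hp2 2)]
                nlinarith
      · rw [if_neg hlt]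
        push_neg at hlt
        exact term_bound hR (hball w hw) hlt

/-- There is no lattice point within distance 1/4 of 2/3. -/
lemma dist_two_thirds (l : ℂ) (hl : l ∈ Lomega 1) : (1/4:ℝ) ≤ ‖((2/3 : ℝ):ℂ) - l‖ := by
  by_contra hc
  push_neg at hc
  obtain ⟨k, rfl, hk⟩ := lattice_near_real hl hc
  rw [abs_lt] at hk
  rcases le_or_gt k 0 with h | h
  · have : (k:ℝ) ≤ 0 := by exact_mod_cast h
    linarith [hk.2]
  · have : (1:ℝ) ≤ (k:ℝ) := by exact_mod_cast h
    linarith [hk.1]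

lemma wp_diffAt_two_thirds : DifferentiableAt ℂ (wp (Lomega 1)) ((2/3 : ℝ):ℂ) := by
  have hd : DifferentiableOn ℂ (wp (Lomega 1)) (Metric.ball ((2/3:ℝ):ℂ) ((1/4)/2)) := by
    apply DifferentiableOn.add
    · apply DifferentiableOn.div (differentiableOn_const _) ((differentiableOn_id).pow 2)
      intro w hw
      apply pow_ne_zero
      intro h0
      have h1 := dist_two_thirds 0 (by simpa using int_mem_L1 0)
      rw [sub_zero] at h1
      rw [Metric.mem_ball, dist_eq_norm, h0, zero_sub, norm_neg] at hw
      linarith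
    · have := tsum_ex_diffOn ∅ (by norm_num : (0:ℝ) < 1/4) (by norm_num)
        (fun l _ => dist_two_thirds (l:ℂ) l.2.1)
      apply this.congr
      intro z hz
      apply tsum_congr
      intro l
      rw [if_neg (Set.notMem_empty l)]
  exact hd.differentiableAt (Metric.ball_mem_nhds _ (by norm_num))


lemma wp_diffOn {z₀ : ℂ} {δ : ℝ} (hδ : 0 < δ) (hδ1 : δ ≤ 1)
    (h : ∀ l ∈ Lomega 1, δ ≤ ‖z₀ - l‖) :
    DifferentiableOn ℂ (wp (Lomega 1)) (Metric.ball z₀ (δ/2)) := by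
  apply DifferentiableOn.add
  · apply DifferentiableOn.div (differentiableOn_const _) ((differentiableOn_id).pow 2)
    intro w hw
    apply pow_ne_zero
    intro h0
    have h1 := h 0 (by simpa using int_mem_L1 0)
    rw [sub_zero] at h1
    rw [Metric.mem_ball, dist_eq_norm, h0, zero_sub, norm_neg] at hw
    linarith
  · have := tsum_ex_diffOn ∅ hδ hδ1 (fun l _ => h (l:ℂ) l.2.1)
    apply this.congr
    intro z hz
    apply tsum_congr
    intro l
    rw [if_neg (Set.notMem_empty l)]

/-- `wp` is continuous at real points of `[2/3, 1-ε]`. -/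
lemma wp_contAt_seg {ε t : ℝ} (hε : 0 < ε) (ht : t ∈ Set.Icc (2/3 : ℝ) (1 - ε)) :
    ContinuousAt (wp (Lomega 1)) ((t:ℝ):ℂ) := by
  set δ : ℝ := min ε (1/4) with hδdef
  have hδ : 0 < δ := lt_min hε (by norm_num)
  have hδ4 : δ ≤ 1/4 := min_le_right _ _
  have hδε : δ ≤ ε := min_le_left _ _
  have hdist : ∀ l ∈ Lomega 1, δ ≤ ‖(t:ℂ) - l‖ := by
    intro l hl
    by_contra hc
    push_neg at hc
    have hc4 : ‖(t:ℂ) - l‖ < 1/4 := lt_of_lt_of_le hc hδ4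
    obtain ⟨k, rfl, hk⟩ := lattice_near_real hl hc4
    have hk2 : |t - (k:ℝ)| < δ := by
      have : |t - (k:ℝ)| = ‖(t:ℂ) - ((k:ℤ):ℂ)‖ := by
        rw [show ((k:ℤ):ℂ) = (((k:ℝ)):ℂ) by push_cast; rfl]
        rw [← Complex.ofReal_sub, Complex.norm_real, Real.norm_eq_abs]
      rw [this]
      exact hc
    rw [abs_lt] at hk2
    have hcase : k ≤ 0 ∨ k = 1 ∨ 2 ≤ k := by omega
    rcases hcase with hcc | hcc | hcc
    · have h0 : (k:ℝ) ≤ 0 := by exact_mod_cast hcc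
      linarith [ht.1, hk2.2]
    · subst hcc
      have hk1 : ((1:ℤ):ℝ) = 1 := by norm_num
      rw [hk1] at hk2
      linarith [ht.2, hk2.1]
    · have h0 : (2:ℝ) ≤ (k:ℝ) := by exact_mod_cast hcc
      linarith [ht.2, hk2.1]
  exact ((wp_diffOn hδ (le_trans hδ4 (by norm_num)) hdist).differentiableAt
    (Metric.ball_mem_nhds _ (by positivity))).continuousAt

lemma wp_bound_seg {ε : ℝ} (hε : 0 < ε) :
    ∃ M : ℝ, ∀ t ∈ Set.Icc (2/3:ℝ) (1-ε), ‖wp (Lomega 1) ((t:ℝ):ℂ)‖ ≤ M := by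
  have hc : ContinuousOn (fun t : ℝ => wp (Lomega 1) ((t:ℝ):ℂ)) (Set.Icc (2/3) (1-ε)) := by
    intro t ht
    exact ((wp_contAt_seg hε ht).comp
      Complex.continuous_ofReal.continuousAt).continuousWithinAt
  exact (isCompact_Icc).exists_bound_of_continuousOn hc

/-- The lattice point 1. -/
noncomputable def p1 : {l : ℂ // l ∈ Lomega 1 ∧ l ≠ 0} :=
  ⟨1, by simpa using int_mem_L1 1, one_ne_zero⟩

lemma dist_one (l : {l : ℂ // l ∈ Lomega 1 ∧ l ≠ 0}) (hne : l ∉ ({p1} : Set _)) :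
    (1/4:ℝ) ≤ ‖(1:ℂ) - (l:ℂ)‖ := by
  by_contra hc
  push_neg at hc
  have hc' : ‖((1:ℝ):ℂ) - (l:ℂ)‖ < 1/4 := by
    rw [Complex.ofReal_one]; exact hc
  obtain ⟨k, hlk, hk⟩ := lattice_near_real l.2.1 hc'
  rw [abs_lt] at hk
  have hk1 : k = 1 := by
    have h1 : (3:ℝ)/4 < (k:ℝ) := by linarith
    have h2 : (k:ℝ) < 5/4 := by linarith
    have h3 : (0:ℤ) < k := by exact_mod_cast lt_of_lt_of_le (by norm_num : (0:ℝ) < 3/4) h1.le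
    have h4 : k < 2 := by
      by_contra hh
      push_neg at hh
      have : (2:ℝ) ≤ (k:ℝ) := by exact_mod_cast hh
      linarith
    omega
  apply hne
  rw [Set.mem_singleton_iff]
  apply Subtype.ext
  rw [hlk, hk1]
  norm_num
  rfl

/-- The lattice sum with the term at 1 removed. -/
noncomputable def Qex (z : ℂ) : ℂ :=
  ∑' l : {l : ℂ // l ∈ Lomega 1 ∧ l ≠ 0},
    (if l ∈ ({p1} : Set _) then 0 else (1/(z - (l:ℂ))^2 - 1/(l:ℂ)^2))

lemma qex_contAt_one : ContinuousAt Qex 1 := by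
  have hd := tsum_ex_diffOn {p1} (show (0:ℝ) < 1/4 by norm_num) (by norm_num)
    (fun l hl => dist_one l hl)
  unfold Qex
  exact (hd.differentiableAt (Metric.ball_mem_nhds _ (by norm_num))).continuousAt

lemma wp_split (z : ℂ) : wp (Lomega 1) z
    = 1/(z - 1)^2 + (1/z^2 - 1 + Qex z) := by
  classical
  rw [wp, Summable.tsum_eq_add_tsum_ite (summable_term z) p1]
  have hval : ((p1 : {l : ℂ // l ∈ Lomega 1 ∧ l ≠ 0}) : ℂ) = 1 := rfl
  rw [hval]
  have hT : ∑' l : {l : ℂ // l ∈ Lomega 1 ∧ l ≠ 0},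
      (if l = p1 then 0 else (1/(z - (l:ℂ))^2 - 1/(l:ℂ)^2)) = Qex z := by
    rw [Qex]
    apply tsum_congr
    intro l
    simp [Set.mem_singleton_iff]
  rw [hT]
  norm_num
  ring

lemma re_wp_tendsto :
    Tendsto (fun t : ℝ => (wp (Lomega 1) ((t:ℝ):ℂ)).re) (𝓝[<] (1:ℝ)) atTop := by
  classical
  set g : ℂ → ℂ := fun z => 1/z^2 - 1 + Qex z with hgdef
  have hg : ContinuousAt g 1 := by
    apply ContinuousAt.add
    · apply ContinuousAt.sub _ continuousAt_const
      apply ContinuousAt.div continuousAt_const (continuousAt_pow _ _)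
      norm_num
    · exact qex_contAt_one
  have key : ∀ t : ℝ, (wp (Lomega 1) ((t:ℝ):ℂ)).re = 1/(t-1)^2 + (g ((t:ℝ):ℂ)).re := by
    intro t
    rw [wp_split, Complex.add_re]
    congr 1
    have hcast : (1/(((t:ℝ):ℂ) - 1)^2) = (((1/(t-1)^2 : ℝ)):ℂ) := by
      push_cast
      ring
    rw [hcast, Complex.ofReal_re]
  have h1 : Tendsto (fun t : ℝ => 1/(t-1)^2) (𝓝[<] (1:ℝ)) atTop := by
    have h2 : Tendsto (fun t : ℝ => (t-1)^2) (𝓝[<] (1:ℝ)) (𝓝[>] 0) := by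
      rw [tendsto_nhdsWithin_iff]
      constructor
      · have hc : Tendsto (fun t : ℝ => (t-1)^2) (𝓝 (1:ℝ)) (𝓝 0) := by
          have h := Continuous.tendsto
            (show Continuous (fun t : ℝ => (t-1)^2) by continuity) 1
          simpa using h
        exact hc.mono_left nhdsWithin_le_nhds
      · filter_upwards [self_mem_nhdsWithin] with t ht
        have hne : t - 1 ≠ 0 := sub_ne_zero.mpr (ne_of_lt ht)
        exact Set.mem_Ioi.mpr (lt_of_le_of_ne (sq_nonneg _) (Ne.symm (pow_ne_zero 2 hne)))
    have h3 := tendsto_inv_nhdsGT_zero.comp h2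
    apply h3.congr
    intro t
    simp [Function.comp, one_div]
  apply Tendsto.congr (fun t => (key t).symm)
  apply Filter.Tendsto.atTop_add h1
  have hc2 : ContinuousAt (g ∘ Complex.ofReal) 1 :=
    ContinuousAt.comp (Complex.ofReal_one ▸ hg) Complex.continuous_ofReal.continuousAt
  have hcont : ContinuousAt (fun t : ℝ => (g ((t:ℝ):ℂ)).re) 1 :=
    Complex.continuous_re.continuousAt.comp hc2
  exact hcont.tendsto.mono_left nhdsWithin_le_nhds

lemma mem_Lomega_iff {ω : ℝ} {z : ℂ} :
    z ∈ Lomega ω ↔ ∃ w, w ∈ Lomega 1 ∧ z = (ω:ℂ) * w := by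
  constructor
  · rintro ⟨m, n, rfl⟩
    exact ⟨_, ⟨m, n, rfl⟩, by push_cast; ring⟩
  · rintro ⟨w, ⟨m, n, rfl⟩, rfl⟩
    exact ⟨m, n, by push_cast; ring⟩

lemma wp_scale {ω : ℝ} (hω : 0 < ω) (z : ℂ) :
    wp (Lomega ω) z = (((ω:ℝ):ℂ)^2)⁻¹ * wp (Lomega 1) (z / ((ω:ℝ):ℂ)) := by
  have hωc : ((ω:ℝ):ℂ) ≠ 0 := by
    simpa using ne_of_gt hω
  have hmem : ∀ a : ℂ, (a ∈ Lomega 1 ∧ a ≠ 0) ↔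
      ((Equiv.mulLeft₀ ((ω:ℝ):ℂ) hωc) a ∈ Lomega ω ∧ (Equiv.mulLeft₀ ((ω:ℝ):ℂ) hωc) a ≠ 0) := by
    intro a
    have hco : (Equiv.mulLeft₀ ((ω:ℝ):ℂ) hωc) a = ((ω:ℝ):ℂ) * a := rfl
    rw [hco]
    constructor
    · rintro ⟨ha, ha0⟩
      exact ⟨mem_Lomega_iff.mpr ⟨a, ha, rfl⟩, mul_ne_zero hωc ha0⟩
    · rintro ⟨ha, ha0⟩
      obtain ⟨w, hw, hww⟩ := mem_Lomega_iff.mp ha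
      have : a = w := by
        exact mul_left_cancel₀ hωc hww
      constructor
      · rw [this]; exact hw
      · intro h0
        exact ha0 (by rw [h0, mul_zero])
  set e : {l : ℂ // l ∈ Lomega 1 ∧ l ≠ 0} ≃ {l : ℂ // l ∈ Lomega ω ∧ l ≠ 0} :=
    Equiv.subtypeEquiv (Equiv.mulLeft₀ ((ω:ℝ):ℂ) hωc) hmem with hedef
  rw [wp, wp, ← Equiv.tsum_eq e
    (fun l : {l : ℂ // l ∈ Lomega ω ∧ l ≠ 0} => 1/(z - (l:ℂ))^2 - 1/(l:ℂ)^2), mul_add]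
  congr 1
  · rw [div_pow, one_div_div, ← mul_div_assoc, inv_mul_cancel₀ (pow_ne_zero 2 hωc), one_div]
  · rw [← tsum_mul_left]
    apply tsum_congr
    intro l
    have hval : ((e l : {l : ℂ // l ∈ Lomega ω ∧ l ≠ 0}) : ℂ) = ((ω:ℝ):ℂ) * (l:ℂ) := rfl
    rw [hval]
    have h1 : z - ((ω:ℝ):ℂ)*l = ((ω:ℝ):ℂ) * (z/((ω:ℝ):ℂ) - l) := by
      field_simp
    rw [h1, mul_pow, mul_pow, one_div, one_div, one_div, one_div, mul_inv, mul_inv]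
    ring


lemma arg_cast {ω y : ℝ} (hω : ω ≠ 0) :
    ((y:ℂ) + 2*((ω:ℝ):ℂ)/3) / ((ω:ℝ):ℂ) = (((y/ω + 2/3 : ℝ)):ℂ) := by
  have hωc : ((ω:ℝ):ℂ) ≠ 0 := by simpa using hω
  push_cast
  field_simp

lemma re_mul6 {ω : ℝ} (w : ℂ) :
    (6 * (((ω:ℝ):ℂ)^2)⁻¹ * w).re = (6/ω^2) * w.re := by
  have h : (6 * (((ω:ℝ):ℂ)^2)⁻¹ : ℂ) = (((6/ω^2 : ℝ)):ℂ) := by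
    push_cast
    ring
  rw [h, Complex.re_ofReal_mul]

end WPaux


open WPaux in
/-- If for each `x > 0`, `u x (y) = 6 ℘_{Λ_{ω_x}}(y + 2ω_x/3)` is the strictly increasing
solution of `u'' = u²`, `u(0) = 0`, `u(x) = 1` on `[0, x]` with `ω x > 0`, then for each
fixed `y > 0`, `x³ u_x(y) → C₁ y` where `C₁ = 6 c₁³ ℘'_{Λ_{ω₁}}(2ω₁/3)` and `c₁ = ω₁/3`. -/
theorem cubic_hitting_asymptotics
    (ω : ℝ → ℝ) (u : ℝ → ℝ → ℝ)
    (hyp : ∀ x : ℝ, 0 < x →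
      0 < ω x ∧
      ContinuousOn (u x) (Icc 0 x) ∧
      StrictMonoOn (u x) (Icc 0 x) ∧
      (∀ y ∈ Ioo 0 x, deriv (deriv (u x)) y = (u x y) ^ 2) ∧
      u x 0 = 0 ∧ u x x = 1 ∧
      (∀ y ∈ Icc 0 x, ((u x y : ℂ)) =
        6 * wp (Lomega (ω x)) ((y : ℂ) + 2 * ((ω x : ℝ) : ℂ) / 3))) :
    ∀ y : ℝ, 0 < y →
      Tendsto (fun x : ℝ => ((x : ℂ)) ^ 3 * ((u x y : ℝ) : ℂ)) atTop
        (nhds (6 * (((ω 1 : ℝ) : ℂ) / 3) ^ 3 *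
          deriv (wp (Lomega (ω 1))) (((2 * ω 1 / 3 : ℝ) : ℂ)) * (y : ℂ))) := by
  intro y hy
  set P : ℂ → ℂ := wp (Lomega 1) with hPdef
  -- the key pointwise formula
  have key : ∀ x : ℝ, 0 < x → ∀ y' ∈ Icc (0:ℝ) x,
      ((u x y' : ℂ)) = 6 * (((ω x:ℝ):ℂ)^2)⁻¹ * P (((y'/ω x + 2/3 : ℝ)):ℂ) := by
    intro x hx y' hy'
    obtain ⟨hω, -, -, -, -, -, heq⟩ := hyp x hx
    rw [heq y' hy', wp_scale hω, arg_cast (ne_of_gt hω)]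
    ring
  have keyre : ∀ x : ℝ, 0 < x → ∀ y' ∈ Icc (0:ℝ) x,
      u x y' = (6/(ω x)^2) * (P (((y'/ω x + 2/3 : ℝ)):ℂ)).re := by
    intro x hx y' hy'
    have h := congrArg Complex.re (key x hx y' hy')
    rwa [Complex.ofReal_re, re_mul6] at h
  -- no pole in the interval: ω x > 3 x
  have hω3 : ∀ x : ℝ, 0 < x → 3*x < ω x := by
    intro x hx
    obtain ⟨hω, hcont, hmono, -, -, hux, -⟩ := hyp x hx
    by_contra hcc
    push_neg at hcc
    set t : ℝ := ω x / 3 with htdef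
    have ht0 : 0 < t := by positivity
    have htx : t ≤ x := by rw [htdef]; linarith
    have harg : Tendsto (fun y' : ℝ => y'/(ω x) + 2/3) (𝓝[<] t) (𝓝[<] (1:ℝ)) := by
      rw [tendsto_nhdsWithin_iff]
      constructor
      · have hcnt : Tendsto (fun y' : ℝ => y'/(ω x) + 2/3) (𝓝 t) (𝓝 (t/(ω x) + 2/3)) :=
          Filter.Tendsto.add_const _ ((continuous_id.div_const (ω x)).tendsto t)
        have hval : t/(ω x) + 2/3 = 1 := by
          rw [htdef]
          field_simp [ne_of_gt hω]
          ring
        rw [hval] at hcnt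
        exact hcnt.mono_left nhdsWithin_le_nhds
      · filter_upwards [self_mem_nhdsWithin] with y' hy'
        have h1 : y'/(ω x) < t/(ω x) := div_lt_div_of_pos_right hy' hω
        have hval : t/(ω x) = 1/3 := by
          rw [htdef]
          field_simp [ne_of_gt hω]
        rw [hval] at h1
        exact Set.mem_Iio.mpr (by linarith)
    have hcomp : Tendsto (fun y' : ℝ => (P (((y'/ω x + 2/3 : ℝ)):ℂ)).re) (𝓝[<] t) atTop :=
      re_wp_tendsto.comp harg
    have hmul : Tendsto (fun y' : ℝ => (6/(ω x)^2) * (P (((y'/ω x + 2/3 : ℝ)):ℂ)).re)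
        (𝓝[<] t) atTop :=
      hcomp.const_mul_atTop (by positivity)
    have hev1 := hmul.eventually_gt_atTop 1
    have hev2 : Ioo (0:ℝ) t ∈ 𝓝[<] t := by
      rw [show Ioo (0:ℝ) t = Ioi 0 ∩ Iio t from rfl]
      exact Filter.inter_mem (mem_nhdsWithin_of_mem_nhds (Ioi_mem_nhds ht0)) self_mem_nhdsWithin
    have hev2' : ∀ᶠ y' in 𝓝[<] t, y' ∈ Ioo (0:ℝ) t := hev2
    obtain ⟨y', hgt, hy'mem⟩ := (hev1.and hev2').exists
    have hymem : y' ∈ Icc (0:ℝ) x := ⟨hy'mem.1.le, hy'mem.2.le.trans htx⟩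
    have hlt : u x y' < 1 := by
      rw [← hux]
      exact hmono hymem ⟨hx.le, le_refl x⟩ (lt_of_lt_of_le hy'mem.2 htx)
    have heq := keyre x hx y' hymem
    rw [← heq] at hgt
    linarith
  -- the ratio x / ω x tends to 1/3
  have hρ : Tendsto (fun x : ℝ => x / ω x) atTop (𝓝 (1/3 : ℝ)) := by
    rw [tendsto_order]
    constructor
    · intro a ha
      rcases le_or_gt a 0 with ha0 | ha0
      · filter_upwards [eventually_gt_atTop 0] with x hx
        have hω := (hyp x hx).1
        have : 0 < x / ω x := by positivity
        linarith
      · set ε : ℝ := 1/3 - a with hεdef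
        have hε : 0 < ε := by rw [hεdef]; linarith
        obtain ⟨M, hM⟩ := wp_bound_seg hε
        filter_upwards [eventually_ge_atTop (max 1 (Real.sqrt (6*(|M|+1))))] with x hxx
        have hx1 : (1:ℝ) ≤ x := le_trans (le_max_left _ _) hxx
        have hx : 0 < x := lt_of_lt_of_le one_pos hx1
        have hω := (hyp x hx).1
        by_contra hcon
        push_neg at hcon
        have hs0 : 0 < x / ω x := by positivity
        have hseg : x/ω x + 2/3 ∈ Icc (2/3:ℝ) (1-ε) := by
          constructor
          · linarith
          · rw [hεdef]; linarith
        have h1 : u x x = (6/(ω x)^2) * (P (((x/ω x + 2/3 : ℝ)):ℂ)).re :=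
          keyre x hx x ⟨hx.le, le_refl x⟩
        have hux : u x x = 1 := (hyp x hx).2.2.2.2.2.1
        rw [hux] at h1
        have hω2 : (0:ℝ) < (ω x)^2 := by positivity
        set r : ℝ := (P (((x/ω x + 2/3 : ℝ)):ℂ)).re with hrdef
        have h2 : (ω x)^2 ≤ 6 * |M| := by
          have hb : r ≤ |M| := by
            calc r ≤ ‖P (((x/ω x + 2/3 : ℝ)):ℂ)‖ := Complex.re_le_norm _
              _ ≤ M := hM _ hseg
              _ ≤ |M| := le_abs_self M
          have h3 : (ω x)^2 = 6 * r := by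
            rw [div_mul_eq_mul_div, eq_div_iff (ne_of_gt hω2)] at h1
            linarith
          linarith
        have hsq : 6*(|M|+1) ≤ x^2 := by
          have h4 := le_trans (le_max_right _ _) hxx
          have h5 : (0:ℝ) ≤ 6*(|M|+1) := by positivity
          nlinarith [Real.sq_sqrt h5, Real.sqrt_nonneg (6*(|M|+1))]
        have hωx := hω3 x hx
        nlinarith [abs_nonneg M]
    · intro b hb
      filter_upwards [eventually_gt_atTop 0] with x hx
      have hω := (hyp x hx).1
      have h1 := hω3 x hx
      have h2 : x / ω x < 1/3 := by
        rw [div_lt_iff₀ hω]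
        linarith
      linarith
  -- derivative data at 2/3
  have hd : DifferentiableAt ℂ P (((2/3:ℝ)):ℂ) := wp_diffAt_two_thirds
  set d : ℂ := deriv P (((2/3:ℝ)):ℂ) with hddef
  have hD : HasDerivAt P d (((2/3:ℝ)):ℂ) := hd.hasDerivAt
  have hω1 : 0 < ω 1 := (hyp 1 one_pos).1
  have hP0 : P (((2/3:ℝ)):ℂ) = 0 := by
    have h0 := key 1 one_pos 0 ⟨le_refl 0, by norm_num⟩
    have hu0 : u 1 0 = 0 := (hyp 1 one_pos).2.2.2.2.1
    rw [hu0] at h0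
    have harg : (0:ℝ)/ω 1 + 2/3 = 2/3 := by rw [zero_div, zero_add]
    rw [harg, Complex.ofReal_zero] at h0
    have h6 : (6 : ℂ) * (((ω 1:ℝ):ℂ)^2)⁻¹ ≠ 0 := by
      apply mul_ne_zero (by norm_num)
      apply inv_ne_zero
      apply pow_ne_zero
      simpa using ne_of_gt hω1
    rcases mul_eq_zero.mp h0.symm with h | h
    · exact absurd h h6
    · exact h
  have hslope : Tendsto (fun w : ℂ => P w / (w - (((2/3:ℝ)):ℂ)))
      (𝓝[≠] (((2/3:ℝ)):ℂ)) (𝓝 d) := by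
    have h1 := hasDerivAt_iff_tendsto_slope.mp hD
    apply h1.congr
    intro w
    rw [slope_def_field, hP0, sub_zero]
  -- ω → ∞ and y/ω → 0
  have hωtop : Tendsto ω atTop atTop := by
    apply tendsto_atTop_mono' atTop (f₁ := fun x : ℝ => 3*x)
    · filter_upwards [eventually_gt_atTop 0] with x hx
      exact (hω3 x hx).le
    · exact tendsto_id.const_mul_atTop (by norm_num : (0:ℝ) < 3)
  have hr : Tendsto (fun x : ℝ => y / ω x) atTop (𝓝 0) :=
    Filter.Tendsto.div_atTop tendsto_const_nhds hωtop
  have hw : Tendsto (fun x : ℝ => (((y/ω x + 2/3 : ℝ)):ℂ)) atTop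
      (𝓝[≠] (((2/3:ℝ)):ℂ)) := by
    rw [tendsto_nhdsWithin_iff]
    constructor
    · have h2 : Tendsto (fun x : ℝ => y/ω x + 2/3) atTop (𝓝 (0 + 2/3)) :=
        Filter.Tendsto.add_const _ hr
      rw [zero_add] at h2
      exact (Complex.continuous_ofReal.tendsto _).comp h2
    · filter_upwards [eventually_gt_atTop 0] with x hx
      have hω := (hyp x hx).1
      have h3 : y/ω x + 2/3 ≠ 2/3 := by
        have : 0 < y/ω x := by positivity
        linarith
      simp only [Set.mem_compl_iff, Set.mem_singleton_iff]
      intro hhh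
      exact h3 (by exact_mod_cast hhh)
  have hE : Tendsto (fun x : ℝ =>
      P ((((y/ω x + 2/3 : ℝ)):ℂ)) / (((((y/ω x + 2/3 : ℝ)):ℂ)) - (((2/3:ℝ)):ℂ)))
      atTop (𝓝 d) := hslope.comp hw
  have hρc : Tendsto (fun x : ℝ => (((x/ω x : ℝ)):ℂ)) atTop (𝓝 (((1/3:ℝ)):ℂ)) :=
    (Complex.continuous_ofReal.tendsto _).comp hρ
  have hT : Tendsto (fun x : ℝ => (6*(y:ℂ)) * ((((x/ω x:ℝ)):ℂ))^3 *
      (P ((((y/ω x + 2/3 : ℝ)):ℂ)) / (((((y/ω x + 2/3 : ℝ)):ℂ)) - (((2/3:ℝ)):ℂ))))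
      atTop (𝓝 ((6*(y:ℂ)) * ((((1/3:ℝ)):ℂ))^3 * d)) :=
    (tendsto_const_nhds.mul (hρc.pow 3)).mul hE
  have heq : ∀ᶠ x in atTop, (6*(y:ℂ)) * ((((x/ω x:ℝ)):ℂ))^3 *
      (P ((((y/ω x + 2/3 : ℝ)):ℂ)) / (((((y/ω x + 2/3 : ℝ)):ℂ)) - (((2/3:ℝ)):ℂ)))
      = ((x:ℂ))^3 * ((u x y : ℝ):ℂ) := by
    filter_upwards [eventually_ge_atTop (max y 1)] with x hxx
    have hx1 : (1:ℝ) ≤ x := le_trans (le_max_right _ _) hxx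
    have hx : 0 < x := lt_of_lt_of_le one_pos hx1
    have hyx : y ≤ x := le_trans (le_max_left _ _) hxx
    have hω := (hyp x hx).1
    rw [key x hx y ⟨hy.le, hyx⟩]
    have hωc : ((ω x:ℝ):ℂ) ≠ 0 := by simpa using ne_of_gt hω
    have hyc : ((y:ℝ):ℂ) ≠ 0 := by simpa using ne_of_gt hy
    have hden : ((((y/ω x + 2/3 : ℝ)):ℂ)) - (((2/3:ℝ)):ℂ) = ((y:ℝ):ℂ) / ((ω x:ℝ):ℂ) := by
      push_cast
      ring
    have hratio : (((x/ω x : ℝ)):ℂ) = ((x:ℝ):ℂ) / ((ω x:ℝ):ℂ) := by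
      push_cast
      ring
    rw [hden, hratio]
    field_simp
  have hL : 6 * (((ω 1 : ℝ) : ℂ) / 3) ^ 3 *
      deriv (wp (Lomega (ω 1))) (((2 * ω 1 / 3 : ℝ) : ℂ)) * (y : ℂ)
      = (6*(y:ℂ)) * ((((1/3:ℝ)):ℂ))^3 * d := by
    have hω1c : ((ω 1:ℝ):ℂ) ≠ 0 := by simpa using ne_of_gt hω1
    have harg : ((2 * ω 1 / 3:ℝ):ℂ) / ((ω 1:ℝ):ℂ) = (((2/3:ℝ)):ℂ) := by
      push_cast
      field_simp
    have hinner : HasDerivAt (fun z : ℂ => z / ((ω 1:ℝ):ℂ)) (1 / ((ω 1:ℝ):ℂ))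
        (((2 * ω 1 / 3:ℝ):ℂ)) := by
      simpa using (hasDerivAt_id (((2 * ω 1 / 3:ℝ):ℂ))).div_const ((ω 1:ℝ):ℂ)
    have hcomp : HasDerivAt (fun z : ℂ => P (z / ((ω 1:ℝ):ℂ))) (d * (1/((ω 1:ℝ):ℂ)))
        (((2 * ω 1 / 3:ℝ):ℂ)) := by
      exact HasDerivAt.comp _ (harg ▸ hD) hinner
    have hfull : HasDerivAt (wp (Lomega (ω 1)))
        ((((ω 1:ℝ):ℂ)^2)⁻¹ * (d * (1/((ω 1:ℝ):ℂ)))) (((2 * ω 1 / 3:ℝ):ℂ)) := by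
      have hfun : wp (Lomega (ω 1)) = fun z => (((ω 1:ℝ):ℂ)^2)⁻¹ * P (z / ((ω 1:ℝ):ℂ)) :=
        funext (wp_scale hω1)
      rw [hfun]
      exact hcomp.const_mul _
    rw [hfull.deriv]
    push_cast
    field_simp
  rw [hL]
  exact hT.congr' heq
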